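/- arXiv:2407.02426 — 4 statements merged into one kernel-verified Lean document; each statement's English description precedes it below -/
import Mathlib

section
/- If S is a state to which the Overflow rule applies (its leftmost entry is odd and all other entries are even), then n(S) = 2^{ℓ(S)} − 1 and σ(S) = +1; moreover n(P(S)) = 0, ℓ(P(S)) = ℓ(S) + 1, and σ(P(S)) = −1. -/
open scoped Classical

namespace Skelet17

/-- The five kinds of transition rules. -/
inductive Rule
  | overflow | halt | zero | halve | increment
  deriving DecidableEq

/-- A state `(a_ℓ, …, a_1, a_0)` (written left to right, `a_0` rightmost) is stored
as the list `[a_0, a_1, …, a_ℓ]`, i.e. with the *rightmost* entry first. -/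
abbrev State := List ℤ

/-- The leftmost entry `a_ℓ` of a state. -/
def leftmost (S : State) : ℤ := S.getLastD 0

/-- The entry `a_i(S)`. -/
def entry (S : State) (i : ℕ) : ℤ := S.getD i 0

/-- `ℓ(S) = |S| - 1`. -/
def ell (S : State) : ℕ := S.length - 1

/-- The Overflow rule applies: the leftmost entry is odd and all other entries are even. -/
def OverflowCond (S : State) : Prop := Odd (leftmost S) ∧ ∀ x ∈ S.dropLast, Even x

/-- The Halt rule applies: all entries are even and the two leftmost entries are `0`. -/
def HaltCond (S : State) : Prop :=
  (∀ x ∈ S, Even x) ∧ S.getLastD 1 = 0 ∧ S.dropLast.getLastD 1 = 0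

/-- The Zero rule applies: all entries are even and the Halt rule does not apply. -/
def ZeroCond (S : State) : Prop := (∀ x ∈ S, Even x) ∧ ¬ HaltCond S

/-- The Halve rule applies: `a_0 = -1` and none of the earlier rules applies. -/
def HalveCond (S : State) : Prop :=
  ¬ OverflowCond S ∧ ¬ HaltCond S ∧ ¬ ZeroCond S ∧ S.headD 0 = -1

/-- The rule applied to a state (the first matching rule). -/
noncomputable def ruleOf (S : State) : Rule :=
  if OverflowCond S then .overflow
  else if HaltCond S then .halt
  else if ZeroCond S then .zero
  else if S.headD 0 = -1 then .halve
  else .increment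

/-- The transition function `P`.  (On a Halt state the process stops; we set `P S = S` there.)
Recall the list stores `a_0` first, so e.g. the Overflow rule
`(2a_ℓ+1, 2a_{ℓ-1}, …, 2a_0) ↦ (0, 2a_ℓ+2, 2a_{ℓ-1}, …, 2a_0)` appends a `0` at the end of
the list and adds `1` to the previously last element. -/
noncomputable def P (S : State) : State :=
  match ruleOf S with
  | .overflow => S.dropLast ++ [leftmost S + 1, 0]
  | .halt => S
  | .zero => (S.set 0 (S.headD 0 - 1)).set (S.length - 1) (leftmost S + 1) ++ [0, 0]
  | .halve => S.tail
  | .increment =>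
      let i := S.findIdx (fun x => x % 2 != 0)   -- index of the rightmost odd entry
      (S.set (i + 1) (S.getD (i + 1) 0 + 1)).set 0 (S.headD 0 - 1)

/-- `S ↦ T` : some iterate of `P` sends `S` to `T`. -/
def Reaches (S T : State) : Prop := ∃ m : ℕ, P^[m] S = T

/-- `σ(S) = +1` if the sum of the entries is odd, `-1` if it is even. -/
noncomputable def sigma (S : State) : ℤ := if Odd S.sum then 1 else -1

/-- `n(S)`: the natural number whose Gray code digits (least significant first) are
`a_1 mod 2, a_2 mod 2, …, a_ℓ mod 2`.  Equivalently (standard Gray-code decoding),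
bit `i` of `n(S)` is the parity of `a_{i+1} + ⋯ + a_ℓ`. -/
def nOf (S : State) : ℕ :=
  ∑ i ∈ Finset.range (ell S),
    2 ^ i * ((∑ j ∈ Finset.Icc (i + 1) (ell S), entry S j) % 2).toNat

/-- `⟨a / 2^j⟩` : the nearest integer to `a / 2^j`, rounding half-integers up. -/
def nearest (j a : ℕ) : ℕ := (2 * a + 2 ^ j) / 2 ^ (j + 1)

/-- `d_j(a, b) = |⟨a/2^j⟩ - ⟨b/2^j⟩|`. -/
def dd (j a b : ℕ) : ℕ := Nat.dist (nearest j a) (nearest j b)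

/-- `S_k = (0, 2, 2^2, …, 2^{2k}, 0)`. -/
def Sk (k : ℕ) : State :=
  0 :: (((List.range (2 * k)).map fun i => (2 : ℤ) ^ (2 * k - i)) ++ [0])

/-- An empty state: `n(E) = 0`, `σ(E) = -1`, and the next rule applied is not Halt. -/
def IsEmptyState (E : State) : Prop :=
  E ≠ [] ∧ nOf E = 0 ∧ sigma E = -1 ∧ ruleOf E ≠ Rule.halt

/-- `m` is the first positive time at which the trajectory of `E` is at an empty state. -/
def NextEmptyAt (E : State) (m : ℕ) : Prop :=
  0 < m ∧ IsEmptyState (P^[m] E) ∧ ∀ t, 0 < t → t < m → ¬ IsEmptyState (P^[t] E)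

/-- `N(E)` : the next empty state after `E` (junk value `[]` if it does not exist). -/
noncomputable def N (E : State) : State :=
  if h : ∃ m, NextEmptyAt E m then P^[h.choose] E else []

/-- The rule applied at time `j` belongs to `T_E`, the sequence of rules from `E` to the
next empty state after `E` (all rules after `E` when no next empty state exists). -/
def InTE (E : State) (j : ℕ) : Prop := ∀ t, 0 < t → t ≤ j → ¬ IsEmptyState (P^[t] E)

/-- Weakly embanked: `T_E` consists of one Zero rule at the start and contains at least two
Halve rules, and all other rules before the second Halve rule are Increment rules. -/
def WeaklyEmbanked (E : State) : Prop :=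
  IsEmptyState E ∧
  ∃ j₁ j₂, 0 < j₁ ∧ j₁ < j₂ ∧ InTE E j₂ ∧
    ruleOf (P^[j₁] E) = Rule.halve ∧ ruleOf (P^[j₂] E) = Rule.halve ∧
    ∀ t, 0 < t → t < j₂ → t ≠ j₁ → ruleOf (P^[t] E) = Rule.increment

/-- Embanked: the next empty state `N(E)` exists and the non-Increment rules of `T_E` consist
of exactly one Zero rule at the start and exactly two Halve rules elsewhere. -/
def Embanked (E : State) : Prop :=
  IsEmptyState E ∧
  ∃ m j₁ j₂, NextEmptyAt E m ∧ 0 < j₁ ∧ j₁ < j₂ ∧ j₂ < m ∧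
    ruleOf (P^[j₁] E) = Rule.halve ∧ ruleOf (P^[j₂] E) = Rule.halve ∧
    ∀ t, 0 < t → t < m → t ≠ j₁ → t ≠ j₂ → ruleOf (P^[t] E) = Rule.increment

/-- `h_i(E)` (`i ∈ {1,2}`): the value of `n` at the state immediately *after* the `i`-th
Halve rule applied after `E`. -/
noncomputable def hVal (E : State) (i : ℕ) : ℕ :=
  nOf (P^[Nat.nth (fun j => ruleOf (P^[j] E) = Rule.halve) (i - 1) + 1] E)

/-- `s_i(E)` (`i ∈ {1,2}`): the value of `n` at the state immediately *before* the `i`-th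
Halve rule applied after `E`. -/
noncomputable def sVal (E : State) (i : ℕ) : ℕ :=
  nOf (P^[Nat.nth (fun j => ruleOf (P^[j] E) = Rule.halve) (i - 1)] E)

/-- `E[i]` : the state `E` with the entry `a_i` replaced by `a_i + 2`. -/
def bump (E : State) (i : ℕ) : State := E.set i (E.getD i 0 + 2)

/-- `N'(E) = N^{⌈(i+1)/2⌉}(E)` for an embanked state `E` with `N(E) = E[i]`
(junk value `E` if no such `i` exists). -/
noncomputable def N' (E : State) : State :=
  if h : ∃ i, i < E.length ∧ N E = bump E i then N^[(h.choose + 2) / 2] E else E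

/-- A rooted embanked state: an embanked state obtained from `S_k` by applying `N'`
some number of times. -/
def RootedEmbanked (k : ℕ) (E : State) : Prop :=
  Embanked E ∧ ∃ e : ℕ, N'^[e] (Sk k) = E

/-- `κ_{E→E'}(j)` : the number of steps `S ↦ N(S)` with `N(S) = S[j]` along the chain
`E, N(E), N²(E), …, N^[t](E) = E'`. -/
noncomputable def kappa (E : State) (t j : ℕ) : ℕ :=
  ((Finset.range t).filter fun s => N (N^[s] E) = bump (N^[s] E) j).card


lemma list_even_sum (l : List ℤ) (h : ∀ x ∈ l, Even x) : Even l.sum := by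
  induction l with
  | nil => simp
  | cons a t ih =>
    simp only [List.sum_cons]
    exact Even.add (h a (by simp)) (ih fun x hx => h x (List.mem_cons_of_mem _ hx))

lemma pow_sum (n : ℕ) : ∑ i ∈ Finset.range n, 2 ^ i = 2 ^ n - 1 := by
  induction n with
  | zero => simp
  | succ n ih =>
    rw [Finset.sum_range_succ, ih, pow_succ]
    have : 1 ≤ 2 ^ n := Nat.one_le_two_pow
    omega

lemma leftmost_eq (S : State) (hS : S ≠ []) : leftmost S = S.getLast hS := by
  rw [leftmost, List.getLastD_eq_getLast?, List.getLast?_eq_getLast hS, Option.getD_some]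

lemma nOf_eq_zero_of_even (T : State) (hT : ∀ x ∈ T, Even x) : nOf T = 0 := by
  rw [nOf]
  refine Finset.sum_eq_zero fun i _ => ?_
  have : Even (∑ j ∈ Finset.Icc (i + 1) (ell T), entry T j) := by
    refine Finset.even_sum _ fun j _ => ?_
    rw [entry]
    rcases lt_or_ge j T.length with hj | hj
    · rw [List.getD_eq_getElem T 0 hj]
      exact hT _ (List.getElem_mem hj)
    · rw [List.getD_eq_default T 0 hj]
      exact Even.zero
  rw [Int.even_iff.1 this]
  simp

/-- If the Overflow rule applies to `S`, then `n(S) = 2^{ℓ(S)} - 1` and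
`σ(S) = +1`; moreover `n(P(S)) = 0`, `ℓ(P(S)) = ℓ(S) + 1` and `σ(P(S)) = -1`. -/
theorem statement_2 (S : State) (hS : S ≠ []) (h : OverflowCond S) :
    nOf S = 2 ^ ell S - 1 ∧ sigma S = 1 ∧
      nOf (P S) = 0 ∧ ell (P S) = ell S + 1 ∧ sigma (P S) = -1 := by
  have hL : 1 ≤ S.length := List.length_pos_of_ne_nil hS
  have hlm : leftmost S = S[S.length - 1]'(by omega) := by
    rw [leftmost_eq S hS, List.getLast_eq_getElem]
  have hODD : Odd (entry S (ell S)) := by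
    rw [entry, List.getD_eq_getElem S 0 (by unfold ell; omega : ell S < S.length)]
    exact hlm ▸ h.1
  have hEVEN : ∀ j < ell S, Even (entry S j) := by
    intro j hj
    have hj' : j < S.dropLast.length := by rw [List.length_dropLast]; unfold ell at hj; omega
    have : entry S j = S.dropLast[j] := by
      rw [entry, List.getD_eq_getElem S 0 (by unfold ell at hj; omega), List.getElem_dropLast]
    rw [this]
    exact h.2 _ (List.getElem_mem hj')
  have hrule : ruleOf S = Rule.overflow := by simp [ruleOf, h]
  have hPS : P S = S.dropLast ++ [leftmost S + 1, 0] := by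
    unfold P; rw [hrule]
  have hTeven : ∀ x ∈ P S, Even x := by
    intro x hx
    rw [hPS, List.mem_append] at hx
    rcases hx with hx | hx
    · exact h.2 x hx
    · simp only [List.mem_cons, List.mem_singleton] at hx
      rcases hx with rfl | rfl | hx
      · exact h.1.add_one
      · exact Even.zero
      · simp at hx
  refine ⟨?_, ?_, nOf_eq_zero_of_even _ hTeven, ?_, ?_⟩
  · rw [nOf]
    have : ∀ i ∈ Finset.range (ell S),
        2 ^ i * ((∑ j ∈ Finset.Icc (i + 1) (ell S), entry S j) % 2).toNat = 2 ^ i := by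
      intro i hi
      rw [Finset.mem_range] at hi
      have hodds : Odd (∑ j ∈ Finset.Icc (i + 1) (ell S), entry S j) := by
        have h1 : ell S = (ell S - 1) + 1 := by omega
        rw [h1, Finset.sum_Icc_succ_top (by omega)]
        refine Even.add_odd ?_ (h1 ▸ hODD)
        refine Finset.even_sum _ fun j hj => hEVEN j ?_
        rw [Finset.mem_Icc] at hj; omega
      rw [Int.odd_iff.1 hodds]
      simp
    rw [Finset.sum_congr rfl this, pow_sum]
  · have : Odd S.sum := by
      have hsplit : S.dropLast ++ [S.getLast hS] = S := List.dropLast_append_getLast hS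
      have hsum : S.sum = S.dropLast.sum + S.getLast hS := by
        conv_lhs => rw [← hsplit]
        simp
      rw [hsum]
      exact Even.add_odd (list_even_sum _ h.2) (leftmost_eq S hS ▸ h.1)
    simp [sigma, this]
  · unfold ell
    rw [hPS]
    simp only [List.length_append, List.length_dropLast, List.length_cons,
      List.length_nil]
    omega
  · have : ¬ Odd (P S).sum := by
      rw [Int.not_odd_iff_even]
      exact list_even_sum _ hTeven
    simp [sigma, this]

end Skelet17
end

section
/- If S is a state to which the Halve rule applies (a_0 = −1 and none of the Overflow, Halt, Zero rules applies), then n(P(S)) = ⌊n(S)/2⌋, ℓ(P(S)) = ℓ(S) − 1, and σ(P(S)) = −σ(S). -/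
open scoped Classical

namespace Skelet17

/-- If the Halve rule applies to `S` (`a_0 = -1` and none of the Overflow,
Halt, Zero rules applies), then `n(P(S)) = ⌊n(S)/2⌋`, `ℓ(P(S)) = ℓ(S) - 1` and
`σ(P(S)) = -σ(S)`. -/
theorem statement_4 (S : State) (hS : S ≠ []) (h : HalveCond S) :
    nOf (P S) = nOf S / 2 ∧ ell (P S) = ell S - 1 ∧ sigma (P S) = -sigma S := by
  obtain ⟨a, T, rfl⟩ : ∃ a T, S = a :: T := by
    cases S with
    | nil => exact absurd rfl hS
    | cons a T => exact ⟨a, T, rfl⟩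
  have ha : a = -1 := by simpa using h.2.2.2
  subst ha
  have hT : T ≠ [] := by
    rintro rfl
    exact h.1 ⟨by norm_num [leftmost], by simp⟩
  have hrule : ruleOf (-1 :: T) = Rule.halve := by
    rw [ruleOf, if_neg h.1, if_neg h.2.1, if_neg h.2.2.1, if_pos h.2.2.2]
  have hP : P (-1 :: T) = T := by
    rw [P, hrule]
    rfl
  rw [hP]
  obtain ⟨L', hL⟩ : ∃ L', T.length = L' + 1 :=
    ⟨T.length - 1, (Nat.succ_pred_eq_of_pos (List.length_pos_iff.mpr hT)).symm⟩
  have shift : ∀ i : ℕ,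
      (∑ j ∈ Finset.Icc (i + 1 + 1) (L' + 1), entry (-1 :: T) j) =
        ∑ j ∈ Finset.Icc (i + 1) L', entry T j := by
    intro i
    rw [← Finset.map_add_right_Icc _ _ 1, Finset.sum_map]
    simp [entry]
  have key : nOf (-1 :: T) =
      ((∑ j ∈ Finset.Icc 1 (L' + 1), entry (-1 :: T) j) % 2).toNat + 2 * nOf T := by
    simp only [nOf, ell, List.length_cons, Nat.add_sub_cancel, hL, Nat.succ_sub_one]
    rw [Finset.sum_range_succ']
    simp only [shift, pow_succ, pow_zero, one_mul, zero_add]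
    have h2 : ∑ x ∈ Finset.range L', 2 ^ x * 2 * ((∑ j ∈ Finset.Icc (x + 1) L', entry T j) % 2).toNat
        = 2 * ∑ x ∈ Finset.range L', 2 ^ x * ((∑ j ∈ Finset.Icc (x + 1) L', entry T j) % 2).toNat := by
      rw [Finset.mul_sum]
      exact Finset.sum_congr rfl fun i _ => by ring
    rw [h2]
    omega
  refine ⟨?_, ?_, ?_⟩
  · rw [key]
    have : ((∑ j ∈ Finset.Icc 1 (L' + 1), entry (-1 :: T) j) % 2).toNat < 2 := by
      have := Int.emod_two_eq (∑ j ∈ Finset.Icc 1 (L' + 1), entry (-1 :: T) j)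
      rcases this with h1 | h1 <;> rw [h1] <;> decide
    omega
  · simp [ell]
  · simp only [sigma]; rw [List.sum_cons]
    have : Odd (-1 + T.sum) ↔ ¬ Odd T.sum := by
      rw [Int.odd_add]
      constructor
      · intro hh hodd
        exact (Int.not_odd_iff_even.mpr (hh.mp (by decide))) hodd
      · intro hh
        exact ⟨fun _ => Int.not_odd_iff_even.mp hh, fun _ => by decide⟩
    by_cases hodd : Odd T.sum
    · rw [if_pos hodd, if_neg (by rw [this]; exact not_not.mpr hodd)]
      norm_num
    · rw [if_neg hodd, if_pos (this.mpr hodd)]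

end Skelet17
end

section
/- If S is a state to which the Increment rule applies (none of the Overflow, Halt, Zero, Halve rules applies), then n(P(S)) = n(S) + σ(S), ℓ(P(S)) = ℓ(S), and σ(P(S)) = σ(S). -/
open scoped Classical

namespace Skelet17

theorem getD_set' (l : List ℤ) (k j : ℕ) (a : ℤ) :
    (l.set k a).getD j 0 = if j = k ∧ k < l.length then a else l.getD j 0 := by
  simp only [List.getD_eq_getElem?_getD, List.getElem?_set]
  split
  · rename_i h; subst h; by_cases hk : k < l.length <;>
      simp [hk, List.getElem?_eq_getElem, List.getElem?_eq_none, le_of_not_gt]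
  · rename_i h; rw [if_neg]; exact fun hh => h hh.1.symm
theorem sum_getD (l : List ℤ) : l.sum = ∑ j ∈ Finset.range l.length, l.getD j 0 := by
  induction l with
  | nil => simp
  | cons x xs ih =>
    simp only [List.sum_cons, List.length_cons, Finset.sum_range_succ', ih]
    simp [add_comm, List.getD_eq_getElem?_getD]


theorem toNat_mod2 (x : ℤ) : ((x % 2).toNat : ℤ) = if Odd x then 1 else 0 := by
  rcases Int.even_or_odd x with h | h
  · simp [Int.even_iff.mp h, h, Int.not_odd_iff_even.mpr h]
  · simp [Int.odd_iff.mp h, h]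
theorem geom2 (n : ℕ) : ∑ b ∈ Finset.range n, (2:ℤ)^b = 2^n - 1 := by
  induction n with
  | zero => simp
  | succ n ih => rw [Finset.sum_range_succ, ih]; ring
theorem odd_succ' (x : ℤ) : Odd (x+1) ↔ Even x := by
  rw [← Int.not_even_iff_odd, Int.even_add_one, not_not]

theorem key (l i : ℕ) (f g : ℕ → ℤ) (hi : i < l)
    (heven : ∀ j < i, Even (f j)) (hodd : Odd (f i))
    (hg : ∀ j, g j = f j + (if j = i+1 then 1 else 0) + (if j = 0 then -1 else 0)) :
    ((∑ b ∈ Finset.range l, 2^b * ((∑ j ∈ Finset.Icc (b+1) l, g j) % 2).toNat : ℕ) : ℤ)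
      = ((∑ b ∈ Finset.range l, 2^b * ((∑ j ∈ Finset.Icc (b+1) l, f j) % 2).toNat : ℕ) : ℤ)
        + (if Odd (∑ j ∈ Finset.range (l+1), f j) then 1 else -1)
    ∧ (∑ j ∈ Finset.range (l+1), g j) = (∑ j ∈ Finset.range (l+1), f j) := by
  set T : ℕ → ℤ := fun b => ∑ j ∈ Finset.Icc (b+1) l, f j with hT
  set T' : ℕ → ℤ := fun b => ∑ j ∈ Finset.Icc (b+1) l, g j with hTd
  have hT' : ∀ b, T' b = T b + (if b ≤ i then 1 else 0) := by
    intro b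
    simp only [hTd, hT, hg]
    rw [Finset.sum_add_distrib, Finset.sum_add_distrib,
      Finset.sum_ite_eq' _ (i+1) (fun _ => (1:ℤ)), Finset.sum_ite_eq' _ 0 (fun _ => (-1:ℤ))]
    have h1 : (i+1 ∈ Finset.Icc (b+1) l) ↔ (b ≤ i) := by rw [Finset.mem_Icc]; omega
    have h2 : (0 ∈ Finset.Icc (b+1) l) ↔ False := by simp [Finset.mem_Icc]
    simp only [h1, h2]
    simp
  have hTb : ∀ b < i, (Odd (T b) ↔ Even (T i)) := by
    intro b hb
    obtain ⟨i', rfl⟩ : ∃ i', i = i'+1 := ⟨i-1, by omega⟩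
    have hTbv : T b = (∑ j ∈ Finset.Ioc b (i'+1), f j) + T (i'+1) := by
      simp only [hT, Finset.Icc_add_one_left_eq_Ioc]
      rw [← Finset.sum_Ioc_consecutive f (le_of_lt hb) (le_of_lt hi)]
    have hoddpart : Odd (∑ j ∈ Finset.Ioc b (i'+1), f j) := by
      rw [← Finset.Icc_add_one_left_eq_Ioc, Finset.sum_Icc_succ_top (by omega : b+1 ≤ i'+1)]
      refine (Finset.even_sum _ fun j hj => heven j ?_).add_odd hodd
      simp only [Finset.mem_Icc] at hj; omega
    rw [hTbv, Int.odd_add]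
    simp [hoddpart]
  have hsum : Odd (∑ j ∈ Finset.range (l+1), f j) ↔ Even (T i) := by
    have h1 : ∑ j ∈ Finset.range (l+1), f j = (∑ j ∈ Finset.range (i+1), f j) + T i := by
      simp only [hT]
      rw [Finset.range_eq_Ico, ← Finset.sum_Ico_consecutive f (Nat.zero_le (i+1))
        (by omega : i+1 ≤ l+1), Finset.Ico_add_one_right_eq_Icc, Finset.Ico_add_one_right_eq_Icc,
        Finset.range_eq_Ico, Finset.Ico_add_one_right_eq_Icc]
    have h2 : Odd (∑ j ∈ Finset.range (i+1), f j) := by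
      rw [Finset.sum_range_succ]
      exact (Finset.even_sum _ fun j hj => heven j (Finset.mem_range.mp hj)).add_odd hodd
    rw [h1, Int.odd_add]
    simp [h2]
  constructor
  · push_cast [toNat_mod2]
    set e : ℤ := if Even (T i) then 1 else -1 with he
    have hσ : (if Odd (∑ j ∈ Finset.range (l+1), f j) then (1:ℤ) else -1) = e := by
      simp only [hsum, he]
    have hterm : ∀ b ∈ Finset.range l, (2:ℤ)^b * (if Odd (T' b) then 1 else 0)
        = 2^b * (if Odd (T b) then 1 else 0)
          + (if b = i then e * 2^b else if b < i then -e * 2^b else 0) := by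
      intro b _
      rcases lt_trichotomy b i with h | h | h
      · rw [hT' b, if_pos (le_of_lt h), if_neg (ne_of_lt h), if_pos h]
        have hb1 : Odd (T b) ↔ Even (T i) := hTb b h
        by_cases hev : Even (T i)
        · have hob : Odd (T b) := hb1.mpr hev
          have : ¬ Odd (T b + 1) := by
            rw [odd_succ', Int.not_even_iff_odd]; exact hob
          rw [if_neg this, if_pos hob, he, if_pos hev]; ring
        · have hob : ¬ Odd (T b) := fun ho => hev (hb1.mp ho)
          have : Odd (T b + 1) := by
            rw [odd_succ']; exact Int.not_odd_iff_even.mp hob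
          rw [if_pos this, if_neg hob, he, if_neg hev]; ring
      · subst h
        rw [hT' b, if_pos le_rfl, if_pos rfl]
        by_cases hev : Even (T b)
        · have : Odd (T b + 1) := (odd_succ' _).mpr hev
          rw [if_pos this, if_neg (Int.not_odd_iff_even.mpr hev), he, if_pos hev]; ring
        · have hob : Odd (T b) := Int.not_even_iff_odd.mp hev
          have : ¬ Odd (T b + 1) := by
            rw [odd_succ', Int.not_even_iff_odd]; exact hob
          rw [if_neg this, if_pos hob, he, if_neg hev]; ring
      · rw [hT' b, if_neg (not_le.mpr h), if_neg (Nat.ne_of_gt h), if_neg (not_lt.mpr (le_of_lt h))]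
        ring
    rw [Finset.sum_congr rfl hterm, Finset.sum_add_distrib, hσ]
    congr 1
    rw [Finset.range_eq_Ico, ← Finset.sum_Ico_consecutive _ (Nat.zero_le (i+1)) (by omega : i+1 ≤ l)]
    have h2 : ∑ b ∈ Finset.Ico (i+1) l, (if b = i then e * 2^b else if b < i then -e * 2^b else 0) = 0 := by
      refine Finset.sum_eq_zero fun b hb => ?_
      simp only [Finset.mem_Ico] at hb
      rw [if_neg (by omega), if_neg (by omega)]
    rw [h2, add_zero, ← Finset.range_eq_Ico, Finset.sum_range_succ, if_pos rfl]
    have h3 : ∑ b ∈ Finset.range i, (if b = i then e * 2^b else if b < i then -e * 2^b else 0)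
        = -e * (2^i - 1) := by
      rw [← geom2, Finset.mul_sum]
      refine Finset.sum_congr rfl fun b hb => ?_
      simp only [Finset.mem_range] at hb
      rw [if_neg (by omega), if_pos hb]
    rw [h3]; ring
  · simp only [hg]
    rw [Finset.sum_add_distrib, Finset.sum_add_distrib,
      Finset.sum_ite_eq' _ (i+1) (fun _ => (1:ℤ)), Finset.sum_ite_eq' _ 0 (fun _ => (-1:ℤ))]
    rw [if_pos (Finset.mem_range.mpr (by omega)), if_pos (Finset.mem_range.mpr (by omega))]
    ring


/-- If the Increment rule applies to `S` (none of the Overflow, Halt, Zero,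
Halve rules applies), then `n(P(S)) = n(S) + σ(S)`, `ℓ(P(S)) = ℓ(S)` and `σ(P(S)) = σ(S)`. -/
theorem statement_5 (S : State) (hS : S ≠ [])
    (h : ¬ OverflowCond S ∧ ¬ HaltCond S ∧ ¬ ZeroCond S ∧ S.headD 0 ≠ -1) :
    (nOf (P S) : ℤ) = (nOf S : ℤ) + sigma S ∧ ell (P S) = ell S ∧ sigma (P S) = sigma S := by
  obtain ⟨hO, hH, hZ, hhead⟩ := h
  have hrule : ruleOf S = Rule.increment := by
    unfold ruleOf; rw [if_neg hO, if_neg hH, if_neg hZ, if_neg hhead]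
  set i := S.findIdx (fun x => x % 2 != 0) with hi_def
  have hL : 0 < S.length := List.length_pos_iff.mpr hS
  have hex : ∃ x ∈ S, (x % 2 != 0) = true := by
    by_contra hc
    push_neg at hc
    have hall : ∀ x ∈ S, Even x := by
      intro x hx
      have := hc x hx
      simpa [Int.even_iff] using this
    by_cases hHa : HaltCond S
    · exact hH hHa
    · exact hZ ⟨hall, hHa⟩
  have hiL : i < S.length := List.findIdx_lt_length_of_exists hex
  have hoddi : Odd (entry S i) := by
    have := List.findIdx_getElem (w := hiL) (p := fun x => x % 2 != 0) (xs := S)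
    rw [show entry S i = S[i] from List.getD_eq_getElem S 0 hiL, Int.odd_iff]
    simp only [bne_iff_ne, ne_eq] at this
    have h2 : S[i] % 2 ≠ 0 := this
    rcases Int.emod_two_eq (S[i]) with h' | h'
    · exact absurd h' h2
    · exact h'
  have hevenj : ∀ j < i, Even (entry S j) := by
    intro j hj
    have hjL : j < S.length := lt_trans hj hiL
    have := List.not_of_lt_findIdx (p := fun x => x % 2 != 0) (xs := S) hj
    rw [show entry S j = S[j] from List.getD_eq_getElem S 0 hjL]
    simpa [Int.even_iff] using this
  have hi1 : i + 1 < S.length := by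
    by_contra hc
    have hieq : i = S.length - 1 := by omega
    apply hO
    constructor
    · have : leftmost S = entry S i := by
        rw [hieq]
        unfold leftmost entry
        rw [List.getLastD_eq_getLast?, List.getLast?_eq_getElem?, List.getD_eq_getElem?_getD]
      rw [this]; exact hoddi
    · intro x hx
      obtain ⟨j, hj, rfl⟩ := List.mem_iff_getElem.mp hx
      have hj' : j < S.length - 1 := by simpa using hj
      have : S.dropLast[j] = S[j]'(by omega) := List.getElem_dropLast ..
      rw [this, ← List.getD_eq_getElem S 0 (by omega : j < S.length)]
      exact hevenj j (by omega)
  have hP : P S = (S.set (i+1) (S.getD (i+1) 0 + 1)).set 0 (S.headD 0 - 1) := by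
    unfold P; rw [hrule]
  have hlen : (P S).length = S.length := by rw [hP]; simp
  have hhd : S.headD 0 = entry S 0 := by unfold entry; cases S <;> simp
  have hent : ∀ j, entry (P S) j
      = entry S j + (if j = i+1 then 1 else 0) + (if j = 0 then -1 else 0) := by
    intro j
    rw [hP]
    show ((S.set (i+1) _).set 0 _).getD j 0 = _
    rw [getD_set', getD_set']
    simp only [List.length_set]
    by_cases hj0 : j = 0
    · subst hj0
      rw [if_pos ⟨rfl, hL⟩, if_neg (by omega : ¬ (0:ℕ) = i+1), if_pos rfl, hhd]
      ring
    · rw [if_neg (by exact fun hh => hj0 hh.1), if_neg hj0]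
      by_cases hj1 : j = i+1
      · subst hj1
        rw [if_pos ⟨rfl, hi1⟩, if_pos rfl]
        unfold entry; ring
      · rw [if_neg (by exact fun hh => hj1 hh.1), if_neg hj1]
        unfold entry; ring
  obtain ⟨L', hL'⟩ : ∃ L', S.length = L' + 1 := ⟨S.length - 1, by omega⟩
  have hiL' : i < L' := by omega
  have hkey := key L' i (entry S) (entry (P S)) hiL' hevenj hoddi hent
  have hellS : ell S = L' := by unfold ell; omega
  have hellP : ell (P S) = L' := by unfold ell; omega
  have hsumS : S.sum = ∑ j ∈ Finset.range (L'+1), entry S j := by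
    rw [sum_getD, hL']; rfl
  have hsumP : (P S).sum = ∑ j ∈ Finset.range (L'+1), entry (P S) j := by
    rw [sum_getD, hlen, hL']; rfl
  refine ⟨?_, by omega, ?_⟩
  · have h1 := hkey.1
    unfold nOf
    rw [hellS, hellP]
    rw [h1]
    unfold sigma
    rw [hsumS]
  · unfold sigma
    rw [hsumS, hsumP, hkey.2]

end Skelet17
end

section
/- Let S and S′ be states with S ↦ S′ such that every rule applied in S → S′ is an Increment rule. Set n = n(S), n′ = n(S′), and ℓ = ℓ(S). Then for every index i with 1 ≤ i ≤ ℓ one has a_i(S′) = a_i(S) + d_i(n, n′), and a_0(S′) = a_0(S) − d_0(n, n′). -/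
open scoped Classical

namespace Skelet17

-- ===== auxiliary lemmas =====

lemma nearest_succ (k n : ℕ) :
    nearest k (n+1) = nearest k n + (if 2^(k+1) - 2 ≤ (2*n + 2^k) % 2^(k+1) then 1 else 0) := by
  have hd : 0 < 2^(k+1) := by positivity
  unfold nearest
  have h : 2*(n+1) + 2^k = (2*n + 2^k) + 2 := by ring
  rw [h, Nat.add_div hd]
  rcases Nat.eq_zero_or_pos k with rfl | hk
  · norm_num
  · have h4 : 4 ≤ 2^(k+1) := by
      calc (4:ℕ) = 2^2 := by norm_num
      _ ≤ 2^(k+1) := Nat.pow_le_pow_right (by norm_num) (by omega)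
    have h2 : 2 / 2^(k+1) = 0 := Nat.div_eq_of_lt (by omega)
    have h3 : 2 % 2^(k+1) = 2 := Nat.mod_eq_of_lt (by omega)
    have h5 := Nat.mod_lt (2*n+2^k) hd
    rw [h2, h3]
    split_ifs with ha hb hb <;> omega

lemma nearest_mono (k : ℕ) {a b : ℕ} (h : a ≤ b) : nearest k a ≤ nearest k b :=
  Nat.div_le_div_right (by omega)

lemma two_pow_sub_one_mod {k i : ℕ} (hk : k ≤ i) : ((2:ℕ)^i - 1) % 2^k = 2^k - 1 := by
  have hpk : (1:ℕ) ≤ 2^k := Nat.one_le_two_pow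
  have he : (2:ℕ)^i = 2^k * 2^(i-k) := by rw [← pow_add]; congr 1; omega
  obtain ⟨B, hB⟩ : ∃ B, 2^(i-k) = B + 1 := ⟨2^(i-k) - 1, by have := Nat.one_le_two_pow (n := i-k); omega⟩
  have he2 : (2:ℕ)^i = 2^k * B + 2^k := by rw [he, hB]; ring
  have h1 : (2:ℕ)^i - 1 = 2^k * B + (2^k - 1) := by omega
  rw [h1, Nat.mul_add_mod, Nat.mod_eq_of_lt (by omega)]

lemma nearest_succ_char {n i : ℕ} (h : n % 2^(i+1) = 2^i - 1) (k : ℕ) :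
    nearest k (n+1) = nearest k n + (if k = 0 ∨ k = i+1 then 1 else 0) := by
  rw [nearest_succ]
  suffices hiff : (2^(k+1) - 2 ≤ (2*n + 2^k) % 2^(k+1)) ↔ (k = 0 ∨ k = i+1) by
    congr 1
    simp only [hiff]
  have hpi : (1:ℕ) ≤ 2^i := Nat.one_le_two_pow
  have hpi1 : (2:ℕ)^(i+1) = 2*2^i := by ring
  rcases Nat.eq_zero_or_pos k with rfl | hk
  · norm_num
  have hk2 : (2:ℕ) ≤ 2^k := by calc (2:ℕ) = 2^1 := rfl
                                   _ ≤ 2^k := Nat.pow_le_pow_right (by norm_num) hk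
  rcases lt_trichotomy k (i+1) with hki | rfl | hki
  · -- 1 ≤ k ≤ i : no change
    have h1 : n % 2^k = 2^k - 1 := by
      rw [← Nat.mod_mod_of_dvd n (pow_dvd_pow 2 (by omega : k ≤ i+1)), h,
        two_pow_sub_one_mod (by omega)]
    obtain ⟨q, hq⟩ : ∃ q, n = 2^k * q + (2^k - 1) :=
      ⟨n / 2^k, by rw [← h1]; exact (Nat.div_add_mod n (2^k)).symm⟩
    have hx : 2*n + 2^k = 2^(k+1) * (q+1) + (2^k - 2) := by
      have e1 : (2:ℕ)^(k+1) * (q+1) = 2*(2^k*q) + 2*2^k := by ring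
      omega
    have hkk : (2:ℕ)^(k+1) = 2*2^k := by ring
    rw [hx, Nat.mul_add_mod, Nat.mod_eq_of_lt (by omega)]
    constructor
    · intro hc; omega
    · intro hc; omega
  · -- k = i+1 : change
    obtain ⟨q, hq⟩ : ∃ q, n = 2^(i+1) * q + (2^i - 1) :=
      ⟨n / 2^(i+1), by rw [← h]; exact (Nat.div_add_mod n (2^(i+1))).symm⟩
    have hx : 2*n + 2^(i+1) = 2^(i+1+1) * q + (2^(i+1+1) - 2) := by
      have e1 : (2:ℕ)^(i+1+1) * q = 2*(2^(i+1)*q) := by ring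
      have e2 : (2:ℕ)^(i+1+1) = 2*2^(i+1) := by ring
      omega
    have e2 : (2:ℕ)^(i+1+1) = 2*2^(i+1) := by ring
    have hlt : (2:ℕ)^(i+1+1) - 2 < 2^(i+1+1) := by omega
    rw [hx, Nat.mul_add_mod, Nat.mod_eq_of_lt hlt]
    simp only [or_true, iff_true]
    omega
  · -- k ≥ i+2 : no change
    have hm : (2:ℕ)^(i+2) ∣ 2^(k+1) := pow_dvd_pow 2 (by omega)
    have hmk : (2:ℕ)^(i+2) ∣ 2^k := pow_dvd_pow 2 (by omega)
    have hm4 : (4:ℕ) ≤ 2^(i+2) := by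
      calc (4:ℕ) = 2^2 := by norm_num
      _ ≤ 2^(i+2) := Nat.pow_le_pow_right (by norm_num) (by omega)
    have e2 : (2:ℕ)^(i+2) = 2*2^(i+1) := by ring
    constructor
    · intro hc
      exfalso
      set x := 2*n + 2^k with hxdef
      set d := 2^(k+1) with hddef
      have hrlt : x % d < d := Nat.mod_lt _ (by positivity)
      have hreven : x % d % 2 = 0 := by
        rw [Nat.mod_mod_of_dvd x (dvd_pow_self 2 (by omega : k+1 ≠ 0))]
        have : (2:ℕ) ∣ x := by
          have : (2:ℕ) ∣ 2^k := dvd_pow_self 2 (by omega)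
          omega
        omega
      have hdeven : (2:ℕ) ∣ d := dvd_pow_self 2 (by omega)
      have hr : x % d = d - 2 := by omega
      have w1 : x % 2^(i+2) = (d - 2) % 2^(i+2) := by
        rw [← hr]; exact (Nat.mod_mod_of_dvd x hm).symm
      obtain ⟨e, he⟩ := hm
      obtain ⟨e', he'⟩ : ∃ e', e = e' + 1 := by
        rcases Nat.eq_zero_or_pos e with rfl | hpos
        · simp at he; omega
        · exact ⟨e - 1, by omega⟩
      have he2 : d = 2^(i+2)*e' + 2^(i+2) := by rw [he, he']; ring
      have hdm : d - 2 = 2^(i+2) * e' + (2^(i+2) - 2) := by omega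
      have w1' : x % 2^(i+2) = 2^(i+2) - 2 := by
        rw [w1, hdm, Nat.mul_add_mod, Nat.mod_eq_of_lt (by omega)]
      have w2 : x % 2^(i+2) = 2^(i+1) - 2 := by
        obtain ⟨f, hf⟩ := hmk
        have hx2 : x % 2^(i+2) = (2*n) % 2^(i+2) := by
          rw [hxdef, hf]
          have hcomm : 2*n + 2^(i+2)*f = 2^(i+2)*f + 2*n := by ring
          rw [hcomm, Nat.mul_add_mod]
        rw [hx2, e2, Nat.mul_mod_mul_left, h]
        omega
      omega
    · intro hc; omega

lemma dd_succ {n i : ℕ} (h : n % 2^(i+1) = 2^i - 1) (k : ℕ) :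
    dd k n (n+1) = if k = 0 ∨ k = i+1 then 1 else 0 := by
  have := nearest_succ_char h k
  simp only [dd, Nat.dist]
  omega

lemma dd_add {k a b c : ℕ} (h1 : a ≤ b) (h2 : b ≤ c) : dd k a c = dd k a b + dd k b c := by
  have m1 := nearest_mono k h1
  have m2 := nearest_mono k h2
  simp only [dd, Nat.dist]
  omega

lemma dd_comm (k a b : ℕ) : dd k a b = dd k b a := by simp [dd, Nat.dist_comm]

lemma dd_self (k a : ℕ) : dd k a a = 0 := by simp [dd]

lemma entry_eq_getElem {S : State} {k : ℕ} (h : k < S.length) : entry S k = S[k] := by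
  simp [entry, List.getD_eq_getElem?_getD, List.getElem?_eq_getElem h]

lemma entry_eq_zero {S : State} {k : ℕ} (h : S.length ≤ k) : entry S k = 0 := by
  simp [entry, List.getD_eq_getElem?_getD, List.getElem?_eq_none h]

lemma entry_set (S : State) (j : ℕ) (v : ℤ) (k : ℕ) :
    entry (S.set j v) k = if j = k ∧ k < S.length then v else entry S k := by
  by_cases hk : k < S.length
  · rw [entry_eq_getElem (by simpa using hk), List.getElem_set, entry_eq_getElem hk]
    split_ifs with h1 h2 h2 <;> simp_all
  · rw [entry_eq_zero (by simpa using Nat.le_of_not_lt hk),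
      entry_eq_zero (Nat.le_of_not_lt hk)]
    simp_all

lemma sum_eq_entry (S : State) : S.sum = ∑ j ∈ Finset.range S.length, entry S j := by
  induction S with
  | nil => simp
  | cons a t ih =>
    rw [List.sum_cons, ih, List.length_cons, Finset.sum_range_succ']
    simp [entry]; ring

lemma getLastD_eq (S : State) (hS : S ≠ []) (d : ℤ) : S.getLastD d = entry S (S.length - 1) := by
  have hl : 0 < S.length := List.length_pos_of_ne_nil hS
  rw [List.getLastD_eq_getLast?, List.getLast?_eq_getElem?,
    List.getElem?_eq_getElem (by omega), entry_eq_getElem (by omega)]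
  rfl

lemma headD_eq (S : State) (hS : S ≠ []) (d : ℤ) : S.headD d = entry S 0 := by
  have hl : 0 < S.length := List.length_pos_of_ne_nil hS
  rw [List.headD_eq_head?, List.head?_eq_getElem?, List.getElem?_eq_getElem (by omega),
    entry_eq_getElem (by omega)]
  rfl

lemma geom_sum_two (n : ℕ) : (∑ k ∈ Finset.range n, 2^k) = 2^n - 1 := by
  induction n with
  | zero => simp
  | succ m ih =>
    rw [Finset.sum_range_succ, ih]
    have : (1:ℕ) ≤ 2^m := Nat.one_le_two_pow
    have e : (2:ℕ)^(m+1) = 2*2^m := by ring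
    omega

lemma step (S : State) (hr : ruleOf S = Rule.increment) :
    (P S).length = S.length ∧ (P S).sum = S.sum ∧
    (Odd S.sum → nOf (P S) = nOf S + 1) ∧ (¬ Odd S.sum → nOf S = nOf (P S) + 1) ∧
    (∀ k, 1 ≤ k → entry (P S) k = entry S k + (dd k (nOf S) (nOf (P S)) : ℤ)) ∧
    entry (P S) 0 = entry S 0 - (dd 0 (nOf S) (nOf (P S)) : ℤ) := by
  -- extract the negated conditions
  have hconds : ¬ OverflowCond S ∧ ¬ HaltCond S ∧ ¬ ZeroCond S ∧ ¬ (S.headD 0 = -1) := by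
    unfold ruleOf at hr
    split_ifs at hr with h1 h2 h3 h4
    exact ⟨h1, h2, h3, h4⟩
  obtain ⟨h1, h2, h3, h4⟩ := hconds
  -- there is an odd entry
  have hex : ∃ x ∈ S, (fun x : ℤ => x % 2 != 0) x = true := by
    by_contra hno
    push_neg at hno
    apply h3
    refine ⟨fun x hx => ?_, h2⟩
    have hx2 := hno x hx
    rw [Int.even_iff]
    simpa using hx2
  set i := S.findIdx (fun x => x % 2 != 0) with hidef
  have hi : i < S.length := List.findIdx_lt_length_of_exists hex
  have hS : S ≠ [] := by
    intro hnil; rw [hnil] at hi; simp at hi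
  have hgeti : S[i]'hi % 2 ≠ 0 := by
    have := List.findIdx_getElem (p := fun x : ℤ => x % 2 != 0) (xs := S) (w := hi)
    simpa using this
  have heven_lt : ∀ j (hj : j < i), S[j]'(by omega) % 2 = 0 := by
    intro j hj
    have := List.not_of_lt_findIdx (p := fun x : ℤ => x % 2 != 0) (xs := S) hj
    simpa using this
  -- i + 1 < length
  have hi1 : i + 1 < S.length := by
    by_contra hle
    apply h1
    have hieq : S.length - 1 = i := by omega
    constructor
    · rw [leftmost, getLastD_eq S hS, hieq, entry_eq_getElem hi]
      rw [Int.odd_iff]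
      rcases Int.emod_two_eq (S[i]'hi) with hh | hh
      · exact absurd hh hgeti
      · exact hh
    · intro x hx
      rw [List.mem_iff_getElem] at hx
      obtain ⟨j, hjlt, rfl⟩ := hx
      rw [List.getElem_dropLast]
      have hjl : j < i := by rw [List.length_dropLast] at hjlt; omega
      rw [Int.even_iff]
      exact heven_lt j hjl
  -- unfold P
  have hP : P S = (S.set (i+1) (S.getD (i+1) 0 + 1)).set 0 (S.headD 0 - 1) := by
    unfold P
    rw [hr]
  have hlen : (P S).length = S.length := by rw [hP]; simp
  -- entries of P S
  have hent : ∀ k, entry (P S) k =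
      entry S k + (if k = i+1 then 1 else 0) - (if k = 0 then 1 else 0) := by
    intro k
    rw [hP, entry_set, List.length_set, entry_set, headD_eq S hS]
    by_cases hk0 : k = 0
    · subst hk0
      rw [if_pos ⟨rfl, by omega⟩, if_neg (by omega), if_pos rfl]
      ring
    · rw [if_neg (by rintro ⟨hc, -⟩; exact hk0 hc.symm)]
      by_cases hk1 : k = i+1
      · subst hk1
        rw [if_pos ⟨rfl, hi1⟩, if_pos rfl, if_neg hk0]
        have : S.getD (i+1) 0 = entry S (i+1) := rfl
        rw [this]; ring
      · rw [if_neg (by rintro ⟨hc, -⟩; exact hk1 hc.symm), if_neg hk1, if_neg hk0]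
        ring
  -- sum preserved
  have hsum : (P S).sum = S.sum := by
    rw [sum_eq_entry, hlen, sum_eq_entry S,
      Finset.sum_congr rfl (fun j (_ : j ∈ Finset.range S.length) => hent j),
      Finset.sum_sub_distrib, Finset.sum_add_distrib,
      Finset.sum_ite_eq' (Finset.range S.length) (i+1) (fun _ => (1:ℤ)),
      Finset.sum_ite_eq' (Finset.range S.length) 0 (fun _ => (1:ℤ))]
    rw [if_pos (Finset.mem_range.mpr hi1), if_pos (Finset.mem_range.mpr (by omega))]
    ring
  have hellP : ell (P S) = ell S := by simp [ell, hlen]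
  have hi1l : i + 1 ≤ ell S := by simp only [ell]; omega
  -- partial sums over Icc
  have hcsum : ∀ k, (∑ j ∈ Finset.Icc (k+1) (ell S), entry (P S) j)
      = (∑ j ∈ Finset.Icc (k+1) (ell S), entry S j) + (if k ≤ i then 1 else 0) := by
    intro k
    rw [Finset.sum_congr rfl (fun j (_ : j ∈ Finset.Icc (k+1) (ell S)) => hent j),
      Finset.sum_sub_distrib, Finset.sum_add_distrib,
      Finset.sum_ite_eq' (Finset.Icc (k+1) (ell S)) (i+1) (fun _ => (1:ℤ)),
      Finset.sum_ite_eq' (Finset.Icc (k+1) (ell S)) 0 (fun _ => (1:ℤ))]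
    have h0notin : (0:ℕ) ∉ Finset.Icc (k+1) (ell S) := by simp
    by_cases hki : k ≤ i
    · rw [if_pos (Finset.mem_Icc.mpr ⟨Nat.succ_le_succ hki, hi1l⟩), if_neg h0notin, if_pos hki]
      ring
    · rw [if_neg (show i+1 ∉ Finset.Icc (k+1) (ell S) by rw [Finset.mem_Icc]; omega),
        if_neg h0notin, if_neg hki]
      ring
  -- prefix sums are even below i, odd at i
  have hprefix : ∀ k, k ≤ i → (∑ j ∈ Finset.range k, entry S j) % 2 = 0 := by
    intro k hk
    induction k with
    | zero => simp
    | succ a iha =>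
      rw [Finset.sum_range_succ]
      have ha1 : entry S a % 2 = 0 := by
        rw [entry_eq_getElem (by omega)]
        exact heven_lt a (by omega)
      have ha2 := iha (by omega)
      omega
  have hsplit : ∀ k, k + 1 ≤ S.length →
      (∑ j ∈ Finset.range (k+1), entry S j) + (∑ j ∈ Finset.Icc (k+1) (ell S), entry S j)
        = S.sum := by
    intro k hk
    rw [sum_eq_entry, ← Finset.Ico_add_one_right_eq_Icc, Finset.range_eq_Ico]
    have hL : ell S + 1 = S.length := by simp only [ell]; omega
    rw [hL, Finset.range_eq_Ico]
    exact Finset.sum_Ico_consecutive _ (by omega) (by omega)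
  have hodd_i : entry S i % 2 = 1 := by
    rw [entry_eq_getElem hi]
    rcases Int.emod_two_eq (S[i]'hi) with hh | hh
    · exact absurd hh hgeti
    · exact hh
  have hbk : ∀ k, k < i → (∑ j ∈ Finset.Icc (k+1) (ell S), entry S j) % 2 = S.sum % 2 := by
    intro k hk
    have hs := hsplit k (by omega)
    have hp := hprefix (k+1) (by omega)
    omega
  have hbi : ((∑ j ∈ Finset.Icc (i+1) (ell S), entry S j) + 1) % 2 = S.sum % 2 := by
    have hs := hsplit i (by omega)
    have hp := hprefix i le_rfl
    rw [Finset.sum_range_succ] at hs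
    omega
  -- notation for the bit sums
  set bS : ℕ → ℕ := fun k => (((∑ j ∈ Finset.Icc (k+1) (ell S), entry S j)) % 2).toNat
    with hbSdef
  set bP : ℕ → ℕ := fun k => (((∑ j ∈ Finset.Icc (k+1) (ell (P S)), entry (P S) j)) % 2).toNat
    with hbPdef
  have hnS : nOf S = ∑ k ∈ Finset.range (ell S), 2^k * bS k := rfl
  have hnP : nOf (P S) = ∑ k ∈ Finset.range (ell S), 2^k * bP k := by
    simp only [hbPdef, nOf, hellP]
  have hbP_tail : ∀ k, i < k → bP k = bS k := by
    intro k hk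
    simp only [hbPdef, hbSdef, hellP, hcsum k, if_neg (by omega : ¬ k ≤ i), add_zero]
  have hbP_head : ∀ k, k ≤ i → bP k = 1 - bS k := by
    intro k hk
    have hc := hcsum k
    rw [if_pos hk] at hc
    have hb2 : (0:ℤ) ≤ (∑ j ∈ Finset.Icc (k+1) (ell S), entry S j) % 2 ∧
        (∑ j ∈ Finset.Icc (k+1) (ell S), entry S j) % 2 < 2 := by
      constructor
      · exact Int.emod_nonneg _ (by norm_num)
      · exact Int.emod_lt_of_pos _ (by norm_num)
    simp only [hbPdef, hbSdef, hellP, hc]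
    omega
  -- split the sums
  have hsum_split : ∀ b : ℕ → ℕ,
      (∑ k ∈ Finset.range (ell S), 2^k * b k)
        = (∑ k ∈ Finset.range (i+1), 2^k * b k) + (∑ k ∈ Finset.Ico (i+1) (ell S), 2^k * b k) := by
    intro b
    rw [Finset.range_eq_Ico, Finset.range_eq_Ico]
    exact (Finset.sum_Ico_consecutive _ (Nat.zero_le _) hi1l).symm
  have htails : (∑ k ∈ Finset.Ico (i+1) (ell S), 2^k * bP k)
      = (∑ k ∈ Finset.Ico (i+1) (ell S), 2^k * bS k) :=
    Finset.sum_congr rfl (fun k hk => by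
      rw [hbP_tail k (by have := Finset.mem_Ico.mp hk; omega)])
  have hdvd_tail : 2^(i+1) ∣ (∑ k ∈ Finset.Ico (i+1) (ell S), 2^k * bS k) :=
    Finset.dvd_sum (fun k hk => Dvd.dvd.mul_right
      (pow_dvd_pow 2 (Finset.mem_Ico.mp hk).1) _)
  obtain ⟨u, hu⟩ := hdvd_tail
  have hpi : (1:ℕ) ≤ 2^i := Nat.one_le_two_pow
  have hpi1 : (2:ℕ)^(i+1) = 2*2^i := by ring
  -- case on parity of the sum
  by_cases hOdd : Odd S.sum
  · have hs2 : S.sum % 2 = 1 := Int.odd_iff.mp hOdd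
    have hBk : ∀ k, k < i → bS k = 1 := by
      intro k hk; simp only [hbSdef, hbk k hk, hs2]; rfl
    have hBi : bS i = 0 := by
      simp only [hbSdef]
      have := hbi; omega
    have hheadS : (∑ k ∈ Finset.range (i+1), 2^k * bS k) = 2^i - 1 := by
      rw [Finset.sum_range_succ, hBi, Nat.mul_zero, Nat.add_zero]
      rw [Finset.sum_congr rfl (fun k hk => by
        rw [hBk k (Finset.mem_range.mp hk), Nat.mul_one])]
      exact geom_sum_two i
    have hheadP : (∑ k ∈ Finset.range (i+1), 2^k * bP k) = 2^i := by
      rw [Finset.sum_range_succ, hbP_head i le_rfl, hBi]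
      have hz : ∀ k ∈ Finset.range i, 2^k * bP k = 0 := by
        intro k hk
        rw [hbP_head k (by have := Finset.mem_range.mp hk; omega),
          hBk k (Finset.mem_range.mp hk)]
        simp
      rw [Finset.sum_congr rfl hz]
      simp
    have hnSv : nOf S = 2^i - 1 + 2^(i+1) * u := by
      rw [hnS, hsum_split, hheadS, hu]
    have hnPv : nOf (P S) = 2^i + 2^(i+1) * u := by
      rw [hnP, hsum_split, hheadP, htails, hu]
    have hmod : nOf S % 2^(i+1) = 2^i - 1 := by
      rw [hnSv, Nat.add_mul_mod_self_left, Nat.mod_eq_of_lt (by omega)]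
    have hsucc : nOf (P S) = nOf S + 1 := by omega
    have hddv : ∀ k, dd k (nOf S) (nOf (P S)) = if k = 0 ∨ k = i+1 then 1 else 0 := by
      intro k; rw [hsucc]; exact dd_succ hmod k
    refine ⟨hlen, hsum, fun _ => hsucc, fun hc => absurd hOdd hc, fun k hk => ?_, ?_⟩
    · rw [hent k, hddv k]
      by_cases hki : k = i+1
      · rw [if_pos hki, if_pos (Or.inr hki), if_neg (by omega)]
        push_cast; ring
      · rw [if_neg hki, if_neg (by omega), if_neg (by omega)]
        push_cast; ring
    · rw [hent 0, hddv 0, if_pos (Or.inl rfl), if_neg (by omega), if_pos rfl]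
      push_cast; ring
  · have hs2 : S.sum % 2 = 0 := by
      rcases Int.emod_two_eq S.sum with hh | hh
      · exact hh
      · exact absurd (Int.odd_iff.mpr hh) hOdd
    have hBk : ∀ k, k < i → bS k = 0 := by
      intro k hk; simp only [hbSdef]
      have := hbk k hk; omega
    have hBi : bS i = 1 := by
      simp only [hbSdef]
      have := hbi; omega
    have hheadS : (∑ k ∈ Finset.range (i+1), 2^k * bS k) = 2^i := by
      rw [Finset.sum_range_succ, hBi, Nat.mul_one]
      have hz : ∀ k ∈ Finset.range i, 2^k * bS k = 0 := by
        intro k hk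
        rw [hBk k (Finset.mem_range.mp hk)]
        simp
      rw [Finset.sum_congr rfl hz]
      simp
    have hheadP : (∑ k ∈ Finset.range (i+1), 2^k * bP k) = 2^i - 1 := by
      rw [Finset.sum_range_succ, hbP_head i le_rfl, hBi]
      rw [Finset.sum_congr rfl (fun k hk => by
        rw [hbP_head k (by have := Finset.mem_range.mp hk; omega),
          hBk k (Finset.mem_range.mp hk), Nat.mul_one])]
      rw [geom_sum_two i]
      omega
    have hnSv : nOf S = 2^i + 2^(i+1) * u := by
      rw [hnS, hsum_split, hheadS, hu]
    have hnPv : nOf (P S) = 2^i - 1 + 2^(i+1) * u := by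
      rw [hnP, hsum_split, hheadP, htails, hu]
    have hmod : nOf (P S) % 2^(i+1) = 2^i - 1 := by
      rw [hnPv, Nat.add_mul_mod_self_left, Nat.mod_eq_of_lt (by omega)]
    have hsucc : nOf S = nOf (P S) + 1 := by omega
    have hddv : ∀ k, dd k (nOf S) (nOf (P S)) = if k = 0 ∨ k = i+1 then 1 else 0 := by
      intro k
      rw [dd_comm, hsucc]
      exact dd_succ hmod k
    refine ⟨hlen, hsum, fun hc => absurd hc hOdd, fun _ => hsucc, fun k hk => ?_, ?_⟩
    · rw [hent k, hddv k]
      by_cases hki : k = i+1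
      · rw [if_pos hki, if_pos (Or.inr hki), if_neg (by omega)]
        push_cast; ring
      · rw [if_neg hki, if_neg (by omega), if_neg (by omega)]
        push_cast; ring
    · rw [hent 0, hddv 0, if_pos (Or.inl rfl), if_neg (by omega), if_pos rfl]
      push_cast; ring

lemma mainAux (m : ℕ) : ∀ S : State, (∀ j < m, ruleOf (P^[j] S) = Rule.increment) →
    (P^[m] S).length = S.length ∧ (P^[m] S).sum = S.sum ∧
    (Odd S.sum → nOf (P^[m] S) = nOf S + m) ∧
    (¬ Odd S.sum → nOf S = nOf (P^[m] S) + m) ∧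
    (∀ k, 1 ≤ k → entry (P^[m] S) k = entry S k + (dd k (nOf S) (nOf (P^[m] S)) : ℤ)) ∧
    entry (P^[m] S) 0 = entry S 0 - (dd 0 (nOf S) (nOf (P^[m] S)) : ℤ) := by
  induction m with
  | zero => intro S _; simp [dd_self]
  | succ m ih =>
    intro S h
    obtain ⟨hlen, hsum, hodd, heven, hent, hent0⟩ := ih S (fun j hj => h j (by omega))
    have hstep := step (P^[m] S) (h m (by omega))
    rw [Function.iterate_succ_apply']
    obtain ⟨slen, ssum, sodd, seven, sent, sent0⟩ := hstep
    by_cases ho : Odd S.sum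
    · have h1 : nOf (P^[m] S) = nOf S + m := hodd ho
      have h2 : nOf (P (P^[m] S)) = nOf (P^[m] S) + 1 := sodd (by rwa [hsum])
      have hdd : ∀ k, dd k (nOf S) (nOf (P (P^[m] S)))
          = dd k (nOf S) (nOf (P^[m] S)) + dd k (nOf (P^[m] S)) (nOf (P (P^[m] S))) :=
        fun k => dd_add (by omega) (by omega)
      refine ⟨by rw [slen, hlen], by rw [ssum, hsum], fun _ => by omega,
        fun hc => absurd ho hc, fun k hk => ?_, ?_⟩
      · rw [sent k hk, hent k hk, hdd k]; push_cast; ring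
      · rw [sent0, hent0, hdd 0]; push_cast; ring
    · have h1 : nOf S = nOf (P^[m] S) + m := heven ho
      have h2 : nOf (P^[m] S) = nOf (P (P^[m] S)) + 1 := seven (by rwa [hsum])
      have hdd : ∀ k, dd k (nOf S) (nOf (P (P^[m] S)))
          = dd k (nOf S) (nOf (P^[m] S)) + dd k (nOf (P^[m] S)) (nOf (P (P^[m] S))) := by
        intro k
        have hd := dd_add (k := k) (a := nOf (P (P^[m] S))) (b := nOf (P^[m] S)) (c := nOf S)
          (by omega) (by omega)
        rw [dd_comm k (nOf S) (nOf (P (P^[m] S))), hd,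
          dd_comm k (nOf (P (P^[m] S))) (nOf (P^[m] S)), dd_comm k (nOf (P^[m] S)) (nOf S)]
        exact Nat.add_comm _ _
      refine ⟨by rw [slen, hlen], by rw [ssum, hsum], fun hc => absurd hc ho,
        fun _ => by omega, fun k hk => ?_, ?_⟩
      · rw [sent k hk, hent k hk, hdd k]; push_cast; ring
      · rw [sent0, hent0, hdd 0]; push_cast; ring

/-- If `S ↦ S'` and every rule applied in `S → S'` is an Increment rule,
then, with `n = n(S)`, `n' = n(S')`, `ℓ = ℓ(S)`: for `1 ≤ i ≤ ℓ` one has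
`a_i(S') = a_i(S) + d_i(n, n')`, and `a_0(S') = a_0(S) - d_0(n, n')`. -/
theorem statement_6 (S S' : State) (hS : S ≠ []) (m : ℕ)
    (hm : P^[m] S = S')
    (hinc : ∀ j < m, ruleOf (P^[j] S) = Rule.increment) :
    (∀ i, 1 ≤ i → i ≤ ell S → entry S' i = entry S i + (dd i (nOf S) (nOf S') : ℤ)) ∧
      entry S' 0 = entry S 0 - (dd 0 (nOf S) (nOf S') : ℤ) := by
  obtain ⟨-, -, -, -, hent, hent0⟩ := mainAux m S hinc
  rw [hm] at hent hent0
  exact ⟨fun i h1 _ => hent i h1, hent0⟩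

end Skelet17
end
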